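/- With α, r_α, β, r_β as in the construction: for every substitution h that is r_α-valid on α, we have h(α) ∉ L_E(β, r_β) if and only if h(α) = v w' v for some word w' ∈ { 0u0 : u ∈ Σ*, |u|_{###} = 0 } such that w' ∉ L_E(γᵢ, r_β) for every i ∈ {1,…,μ}. -/

import Mathlib

/-- The binary alphabet `{0, #}`: `false` represents `0`, `true` represents `#`. -/
abbrev Bin := Bool

/-- Patterns over `Σ ∪ X` with `Σ = Bin` and variable set `X = ℕ`. -/
abbrev Pattern := List (Bin ⊕ ℕ)

/-- Applying a substitution (determined by its action on variables, and fixing every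
terminal) to a pattern. -/
def applySub (s : ℕ → List Bin) : Pattern → List Bin
  | [] => []
  | c :: p => Sum.elim (fun a => [a]) s c ++ applySub s p

/-- The set of variables occurring in a pattern. -/
def varsOf (p : Pattern) : Set ℕ := {x | Sum.inr x ∈ p}

/-- A substitution is `r`-valid on `p` if every variable occurring in `p` is mapped into
its constraint language. -/
def Valid (r : ℕ → Set (List Bin)) (p : Pattern) (s : ℕ → List Bin) : Prop :=
  ∀ x ∈ varsOf p, s x ∈ r x

/-- The erasing constrained pattern language `L_E(p, r)`. -/
def LangE (p : Pattern) (r : ℕ → Set (List Bin)) : Set (List Bin) :=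
  {w | ∃ s, Valid r p s ∧ applySub s p = w}

/-- The word `v = 0###0`. -/
def vWord : List Bin := [false, true, true, true, false]

/-- `u` contains no occurrence of `###` as a factor, i.e. `|u|_{###} = 0`. -/
def NoTripleHash (u : List Bin) : Prop := ¬ ([true, true, true] <:+: u)

/-- The constraint language of the variable `α₁`:
`{0w0 : w ∈ Σ*, |w|_{###} = 0} ∪ {ε}`. -/
def Ra1 : Set (List Bin) :=
  {w | ∃ u, NoTripleHash u ∧ w = [false] ++ u ++ [false]} ∪ {[]}

/-- The constraint language of the variable `ỹ`:
`Σ* \ { v u v : u ∈ Ra1, u ≠ ε }`. -/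
def Ryt : Set (List Bin) :=
  {w | ¬ ∃ u ∈ Ra1, u ≠ [] ∧ w = vWord ++ u ++ vWord}

/-- All the data and assumptions of the construction: the patterns with regular
constraints `(α, r_α)` and `(β, r_β)` built from the predicates `γ₁, …, γ_μ`. -/
structure Construction where
  /-- the variable `x_v` of `α` -/
  xv : ℕ
  /-- the variable `α₁` of `α` -/
  a1 : ℕ
  /-- the variable `ỹ` of `α` -/
  yt : ℕ
  /-- the number of predicates -/
  μ : ℕ
  /-- the variables `x₁, …, x_μ` of `β` -/
  xs : Fin μ → ℕ
  /-- the terminal-free predicate patterns `γ₁, …, γ_μ` (words over variables) -/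
  γ : Fin μ → List ℕ
  /-- the variable `z̃` of `β` -/
  zt : ℕ
  /-- the constraint `r_α` -/
  rα : ℕ → Set (List Bin)
  /-- the constraint `r_β` -/
  rβ : ℕ → Set (List Bin)
  xv_ne_a1 : xv ≠ a1
  xv_ne_yt : xv ≠ yt
  a1_ne_yt : a1 ≠ yt
  hxv : rα xv = {[], vWord}
  ha1 : rα a1 = Ra1
  hyt : rα yt = Ryt
  xs_inj : Function.Injective xs
  xs_ne_zt : ∀ i, xs i ≠ zt
  xs_fresh : ∀ i, xs i ≠ xv ∧ xs i ≠ a1 ∧ xs i ≠ yt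
  zt_fresh : zt ≠ xv ∧ zt ≠ a1 ∧ zt ≠ yt
  γ_disj : ∀ i j, i ≠ j → ∀ x ∈ γ i, x ∉ γ j
  γ_fresh : ∀ i, ∀ x ∈ γ i,
    (∀ j, x ≠ xs j) ∧ x ≠ zt ∧ x ≠ xv ∧ x ≠ a1 ∧ x ≠ yt
  hrβxs : ∀ i, rβ (xs i) = {[], vWord}
  hrβzt : rβ zt = Ryt
  hrβγ_eps : ∀ i, ∀ x ∈ γ i, [] ∈ rβ x
  hγ_lang : ∀ i, ∀ w ∈ LangE ((γ i).map Sum.inr) rβ,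
    w = [] ∨ ∃ u, NoTripleHash u ∧ w = [false] ++ u ++ [false]

/-- The pattern `α = x_v α₁ x_v ỹ`. -/
def Construction.α (C : Construction) : Pattern :=
  [Sum.inr C.xv, Sum.inr C.a1, Sum.inr C.xv, Sum.inr C.yt]

/-- The pattern `β̂ᵢ = xᵢ γᵢ xᵢ`. -/
def Construction.βhat (C : Construction) (i : Fin C.μ) : Pattern :=
  Sum.inr (C.xs i) :: ((C.γ i).map Sum.inr ++ [Sum.inr (C.xs i)])

/-- The pattern `β = β̂₁ ⋯ β̂_μ z̃`. -/
def Construction.β (C : Construction) : Pattern :=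
  (List.ofFn C.βhat).flatten ++ [Sum.inr C.zt]

lemma noTripleHash_tail {a : Bin} {u : List Bin} (h : NoTripleHash (a :: u)) :
    NoTripleHash u := fun hi => h (hi.trans ((u.suffix_cons a).isInfix))

lemma noTripleHash_cons_false {u : List Bin} (hu : NoTripleHash u) :
    NoTripleHash (false :: u) := by
  rintro ⟨s, t, hst⟩
  rcases s with _ | ⟨x, s⟩
  · simp at hst
  · rw [List.cons_append, List.cons_append, List.cons.injEq] at hst
    exact hu ⟨s, t, hst.2⟩

lemma uniq : ∀ (u : List Bin), NoTripleHash u → ∀ s t : List Bin,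
    s ++ [true,true,true] ++ t = u ++ [false,false,true,true,true,false] →
    s.length = u.length + 2 := by
  intro u
  induction u with
  | nil =>
    intro _ s t h
    rcases s with _ | ⟨x, _ | ⟨y, _ | ⟨z, _ | ⟨w, s⟩⟩⟩⟩ <;> simp_all
    have := congrArg List.length h.2.2.2.2
    simp at this
    omega
  | cons a u ih =>
    intro hu s t h
    rcases s with _ | ⟨x, s⟩
    · rcases u with _ | ⟨b, _ | ⟨c, u⟩⟩ <;> simp_all
      exact hu ⟨[], u, by simp⟩
    · rw [List.cons_append, List.cons_append, List.cons_append, List.cons.injEq] at h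
      have := ih (noTripleHash_tail hu) s t h.2
      simp [this]

lemma plain_prefix_v (u t t' : List Bin) (hu : NoTripleHash u)
    (h : ([false] ++ u ++ [false]) ++ t' = vWord ++ t) : False := by
  rcases u with _ | ⟨a, _ | ⟨b, _ | ⟨c, u⟩⟩⟩ <;> simp_all [vWord]
  exact hu ⟨[], u, by simp [h.1, h.2.1, h.2.2.1]⟩

lemma key (u u' R : List Bin) (hu : NoTripleHash u) (hu' : NoTripleHash u')
    (h : (([false] ++ u' ++ [false]) ++ vWord) ++ R = ([false] ++ u ++ [false]) ++ vWord) :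
    ([false] ++ u' ++ [false] : List Bin) = [false] ++ u ++ [false] ∧ R = [] := by
  have h2 : ((false :: u') ++ [false, false]) ++ [true, true, true] ++ ([false] ++ R)
      = (false :: u) ++ [false, false, true, true, true, false] := by
    simpa [vWord, List.append_assoc] using h
  have hlen := uniq (false :: u) (noTripleHash_cons_false hu) _ _ h2
  simp at hlen
  have h3 : ([false] ++ u' ++ [false]) ++ (vWord ++ R) = ([false] ++ u ++ [false]) ++ vWord := by
    simpa [List.append_assoc] using h
  have := List.append_inj h3 (by simp [hlen])
  refine ⟨this.1, by simpa using this.2⟩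

lemma main_blocks : ∀ (blocks : List (List Bin × List Bin)) (z w' u : List Bin),
    (∀ p ∈ blocks, (p.1 = [] ∨ p.1 = vWord) ∧
      (p.2 = [] ∨ ∃ u0, NoTripleHash u0 ∧ p.2 = [false] ++ u0 ++ [false])) →
    z ∈ Ryt → NoTripleHash u → w' = [false] ++ u ++ [false] →
    (blocks.map (fun p => p.1 ++ p.2 ++ p.1)).flatten ++ z = vWord ++ w' ++ vWord →
    ∃ p ∈ blocks, p.2 = w' := by
  intro blocks
  induction blocks with
  | nil =>
    intro z w' u hb hz hu hw' h
    simp at h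
    exact absurd ⟨w', Or.inl ⟨u, hu, hw'⟩, by simp [hw'], h⟩ hz
  | cons p rest ih =>
    rcases p with ⟨a, g⟩
    intro z w' u hb hz hu hw' h
    obtain ⟨ha, hg⟩ := hb (a, g) (List.mem_cons_self)
    simp only at ha hg
    rcases ha with rfl | rfl
    · rcases hg with rfl | ⟨u0, hu0, rfl⟩
      · simp only [List.map_cons, List.flatten_cons, List.nil_append, List.append_nil] at h
        obtain ⟨q, hq, hqe⟩ := ih z w' u (fun q hq => hb q (List.mem_cons_of_mem _ hq)) hz hu hw' h
        exact ⟨q, List.mem_cons_of_mem _ hq, hqe⟩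
      · exfalso
        refine plain_prefix_v u0 (w' ++ vWord) ((rest.map (fun p => p.1 ++ p.2 ++ p.1)).flatten ++ z) hu0 ?_
        simpa [List.append_assoc] using h
    · have hc : g ++ vWord ++ ((rest.map (fun p => p.1 ++ p.2 ++ p.1)).flatten ++ z)
          = w' ++ vWord := by
        apply List.append_cancel_left (as := vWord)
        simpa [List.append_assoc] using h
      rcases hg with rfl | ⟨u0, hu0, rfl⟩
      · exfalso
        refine plain_prefix_v u ((rest.map (fun p => p.1 ++ p.2 ++ p.1)).flatten ++ z) vWord hu ?_
        rw [hw'] at hc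
        simpa [List.append_assoc] using hc.symm
      · have := key u u0 _ hu hu0 (by simpa [List.append_assoc, hw'] using hc)
        exact ⟨(vWord, [false] ++ u0 ++ [false]), List.mem_cons_self, by rw [hw']; exact this.1⟩

lemma applySub_append (s : ℕ → List Bin) (p q : Pattern) :
    applySub s (p ++ q) = applySub s p ++ applySub s q := by
  induction p with
  | nil => simp [applySub]
  | cons c p ih => simp [applySub, ih]

lemma applySub_flatten (s : ℕ → List Bin) (L : List Pattern) :
    applySub s L.flatten = (L.map (applySub s)).flatten := by
  induction L with
  | nil => simp [applySub]
  | cons p L ih => simp [applySub_append, ih]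

lemma applySub_tf (s : ℕ → List Bin) (l : List ℕ) :
    applySub s (l.map Sum.inr) = (l.map s).flatten := by
  induction l with
  | nil => simp [applySub]
  | cons x l ih => simp [applySub, ih]

lemma applySub_congr (s s' : ℕ → List Bin) (p : Pattern)
    (h : ∀ x ∈ varsOf p, s x = s' x) : applySub s p = applySub s' p := by
  induction p with
  | nil => rfl
  | cons c p ih =>
    have h2 : ∀ x ∈ varsOf p, s x = s' x := fun x hx =>
      h x (by simpa [varsOf] using Or.inr (by simpa [varsOf] using hx))
    rcases c with a | x
    · simp [applySub, ih h2]
    · simp [applySub, ih h2, h x (by simp [varsOf])]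

lemma flatten_ofFn_all_nil {A : Type*} {n : ℕ} (f : Fin n → List A)
    (hf : ∀ i, f i = []) : (List.ofFn f).flatten = [] := by
  simp [List.flatten_eq_nil_iff, List.mem_ofFn]
  intro i; exact hf i

lemma flatten_ofFn_single {A : Type*} : ∀ {n : ℕ} (f : Fin n → List A) (i₀ : Fin n),
    (∀ i, i ≠ i₀ → f i = []) → (List.ofFn f).flatten = f i₀ := by
  intro n
  induction n with
  | zero => exact fun f i₀ => i₀.elim0
  | succ n ih =>
    intro f i₀ hf
    rw [List.ofFn_succ, List.flatten_cons]
    rcases Fin.eq_zero_or_eq_succ i₀ with rfl | ⟨j, rfl⟩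
    · rw [flatten_ofFn_all_nil _ (fun i => hf i.succ (Fin.succ_ne_zero i))]
      simp
    · rw [hf 0 (Ne.symm (Fin.succ_ne_zero j)), ih (fun i => f i.succ) j
        (fun i hi => hf i.succ (by simpa [Fin.succ_inj] using hi))]
      simp

lemma beta_apply (C : Construction) (s : ℕ → List Bin) :
    applySub s C.β = (List.ofFn (fun i =>
      s (C.xs i) ++ applySub s ((C.γ i).map Sum.inr) ++ s (C.xs i))).flatten ++ s C.zt := by
  unfold Construction.β
  rw [applySub_append, applySub_flatten, List.map_ofFn]
  have hfn : (applySub s ∘ C.βhat) = fun i =>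
      s (C.xs i) ++ applySub s ((C.γ i).map Sum.inr) ++ s (C.xs i) := by
    funext i
    simp [Construction.βhat, applySub, applySub_append, List.append_assoc]
  rw [hfn]
  simp [applySub]

lemma mem_vars_beta (C : Construction) (x : ℕ) :
    x ∈ varsOf C.β ↔ (∃ i, x = C.xs i ∨ x ∈ C.γ i) ∨ x = C.zt := by
  simp only [varsOf, Construction.β, Construction.βhat, Set.mem_setOf_eq, List.mem_append,
    List.mem_flatten, List.mem_ofFn, List.mem_cons, List.mem_singleton, List.mem_map,
    Sum.inr.injEq]
  aesop (add simp [Construction.βhat])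

lemma mem_vars_gamma (C : Construction) (i : Fin C.μ) (x : ℕ) :
    x ∈ varsOf ((C.γ i).map Sum.inr) ↔ x ∈ C.γ i := by
  simp [varsOf, List.mem_map]

lemma nil_mem_Ryt : ([] : List Bin) ∈ Ryt := by
  rintro ⟨u, hu, hne, heq⟩
  have := congrArg List.length heq
  simp [vWord] at this

/-- For every `r_α`-valid substitution `h`, the word `h(α)` lies outside
`L_E(β, r_β)` iff `h(α) = v w' v` for some `w' ∈ {0u0 : u ∈ Σ*, |u|_{###} = 0}`
with `w' ∉ L_E(γᵢ, r_β)` for every `i`. -/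
theorem not_in_beta_iff_special_avoiding_all_predicates (C : Construction)
    (h : ℕ → List Bin) (hvalid : Valid C.rα C.α h) :
    applySub h C.α ∉ LangE C.β C.rβ ↔
      ∃ w' : List Bin,
        (∃ u, NoTripleHash u ∧ w' = [false] ++ u ++ [false]) ∧
        (∀ i : Fin C.μ, w' ∉ LangE ((C.γ i).map Sum.inr) C.rβ) ∧
        applySub h C.α = vWord ++ w' ++ vWord := by
  classical
  constructor
  · intro hnotin
    by_contra hno
    apply hnotin
    by_cases hdec : ∃ u, NoTripleHash u ∧
        applySub h C.α = vWord ++ ([false] ++ u ++ [false]) ++ vWord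
    · obtain ⟨u, hu, heq⟩ := hdec
      have hnall : ¬ ∀ i : Fin C.μ,
          ([false] ++ u ++ [false]) ∉ LangE ((C.γ i).map Sum.inr) C.rβ := by
        intro hall
        exact hno ⟨_, ⟨u, hu, rfl⟩, hall, heq⟩
      push_neg at hnall
      obtain ⟨i₀, hi₀⟩ := hnall
      obtain ⟨s₁, hs₁v, hs₁e⟩ := hi₀
      set s : ℕ → List Bin :=
        fun x => if x = C.xs i₀ then vWord else if x ∈ C.γ i₀ then s₁ x else [] with hs
      have hzt : s C.zt = [] := by
        have h1 : C.zt ≠ C.xs i₀ := fun e => C.xs_ne_zt i₀ e.symm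
        have h2 : C.zt ∉ C.γ i₀ := fun hm => (C.γ_fresh i₀ _ hm).2.1 rfl
        simp [hs, h1, h2]
      refine ⟨s, ?_, ?_⟩
      · intro x hx
        rw [mem_vars_beta] at hx
        rcases hx with ⟨i, rfl | hxg⟩ | rfl
        · rw [C.hrβxs i]
          by_cases h1 : C.xs i = C.xs i₀
          · simp [hs, h1]
          · have h2 : C.xs i ∉ C.γ i₀ := fun hm => ((C.γ_fresh i₀ _ hm).1 i) rfl
            simp [hs, h1, h2]
        · have h1 : x ≠ C.xs i₀ := (C.γ_fresh i _ hxg).1 i₀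
          by_cases h2 : x ∈ C.γ i₀
          · have hv : s x = s₁ x := by simp [hs, h1, h2]
            rw [hv]
            exact hs₁v x ((mem_vars_gamma C i₀ x).2 h2)
          · have hv : s x = [] := by simp [hs, h1, h2]
            rw [hv]
            exact C.hrβγ_eps i x hxg
        · rw [hzt, C.hrβzt]
          exact nil_mem_Ryt
      · rw [beta_apply, hzt, List.append_nil]
        rw [flatten_ofFn_single _ i₀ ?_]
        · have hx0 : s (C.xs i₀) = vWord := by simp [hs]
          have hg0 : applySub s ((C.γ i₀).map Sum.inr) = [false] ++ u ++ [false] := by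
            rw [applySub_congr s s₁ _ ?_, hs₁e]
            intro x hx
            rw [mem_vars_gamma] at hx
            have h1 : x ≠ C.xs i₀ := (C.γ_fresh i₀ _ hx).1 i₀
            simp [hs, h1, hx]
          rw [hx0, hg0, heq]
        · intro i hi
          have hxi : s (C.xs i) = [] := by
            have h1 : C.xs i ≠ C.xs i₀ := fun e => hi (C.xs_inj e)
            have h2 : C.xs i ∉ C.γ i₀ := fun hm => ((C.γ_fresh i₀ _ hm).1 i) rfl
            simp [hs, h1, h2]
          have hgi : applySub s ((C.γ i).map Sum.inr) = [] := by
            rw [applySub_tf]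
            rw [List.flatten_eq_nil_iff]
            intro l hl
            obtain ⟨x, hx, rfl⟩ := List.mem_map.1 hl
            have h1 : x ≠ C.xs i₀ := (C.γ_fresh i _ hx).1 i₀
            have h2 : x ∉ C.γ i₀ := C.γ_disj i i₀ hi x hx
            simp [hs, h1, h2]
          rw [hxi, hgi]
          rfl
    · set s : ℕ → List Bin := fun x => if x = C.zt then applySub h C.α else [] with hs
      refine ⟨s, ?_, ?_⟩
      · intro x hx
        rw [mem_vars_beta] at hx
        rcases hx with ⟨i, rfl | hxg⟩ | rfl
        · rw [C.hrβxs i]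
          simp [hs, C.xs_ne_zt i]
        · have h1 : x ≠ C.zt := (C.γ_fresh i _ hxg).2.1
          have hv : s x = [] := by simp [hs, h1]
          rw [hv]
          exact C.hrβγ_eps i x hxg
        · have hv : s C.zt = applySub h C.α := by simp [hs]
          rw [hv, C.hrβzt]
          rintro ⟨u, humem, hune, hueq⟩
          rcases humem with ⟨u0, hu0, rfl⟩ | rfl
          · exact hdec ⟨u0, hu0, hueq⟩
          · exact hune rfl
      · rw [beta_apply, flatten_ofFn_all_nil, List.nil_append]
        · simp [hs]
        · intro i
          have hxi : s (C.xs i) = [] := by simp [hs, C.xs_ne_zt i]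
          have hgi : applySub s ((C.γ i).map Sum.inr) = [] := by
            rw [applySub_tf]
            rw [List.flatten_eq_nil_iff]
            intro l hl
            obtain ⟨x, hx, rfl⟩ := List.mem_map.1 hl
            have h1 : x ≠ C.zt := (C.γ_fresh i _ hx).2.1
            simp [hs, h1]
          rw [hxi, hgi]
          rfl
  · rintro ⟨w', ⟨u, hu, hw'⟩, havoid, heq⟩ ⟨s, hsv, hse⟩
    have hGmem : ∀ i, applySub s ((C.γ i).map Sum.inr) ∈ LangE ((C.γ i).map Sum.inr) C.rβ :=
      fun i => ⟨s, fun x hx => hsv x ((mem_vars_beta C x).2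
        (Or.inl ⟨i, Or.inr ((mem_vars_gamma C i x).1 hx)⟩)), rfl⟩
    have hA : ∀ i, s (C.xs i) = [] ∨ s (C.xs i) = vWord := by
      intro i
      have hm := hsv (C.xs i) ((mem_vars_beta C _).2 (Or.inl ⟨i, Or.inl rfl⟩))
      rw [C.hrβxs i] at hm
      simpa [Set.mem_insert_iff] using hm
    have hz : s C.zt ∈ Ryt := by
      have hm := hsv C.zt ((mem_vars_beta C _).2 (Or.inr rfl))
      rwa [C.hrβzt] at hm
    have heqn : ((List.ofFn (fun i => (s (C.xs i), applySub s ((C.γ i).map Sum.inr)))).map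
        (fun p => p.1 ++ p.2 ++ p.1)).flatten ++ s C.zt = vWord ++ w' ++ vWord := by
      rw [List.map_ofFn]
      have hc : ((fun p : List Bin × List Bin => p.1 ++ p.2 ++ p.1) ∘
          fun i => (s (C.xs i), applySub s ((C.γ i).map Sum.inr))) =
          fun i => s (C.xs i) ++ applySub s ((C.γ i).map Sum.inr) ++ s (C.xs i) := rfl
      rw [hc, ← beta_apply, hse, heq]
    have hblocks : ∀ p ∈ List.ofFn (fun i => (s (C.xs i), applySub s ((C.γ i).map Sum.inr))),
        (p.1 = [] ∨ p.1 = vWord) ∧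
        (p.2 = [] ∨ ∃ u0, NoTripleHash u0 ∧ p.2 = [false] ++ u0 ++ [false]) := by
      intro p hp
      obtain ⟨i, rfl⟩ := List.mem_ofFn.1 hp
      exact ⟨hA i, C.hγ_lang i _ (hGmem i)⟩
    obtain ⟨p, hp, hpe⟩ := main_blocks _ _ _ u hblocks hz hu hw' heqn
    obtain ⟨i, hip⟩ := List.mem_ofFn.1 hp
    have hgw : applySub s ((C.γ i).map Sum.inr) = w' := by rw [← hpe, ← hip]
    exact havoid i (hgw ▸ hGmem i)
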